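/- Let l ≥ 1 and let k_1,…,k_l be positive integers. Then in ℋ¹ one has ∑_{j=0}^{l} (−1)^j · d(z_{k_j} z_{k_{j-1}} ⋯ z_{k_1}) * (z_{k_{j+1}} z_{k_{j+2}} ⋯ z_{k_l}) = 0, where for j = 0 the word z_{k_j}⋯z_{k_1} is the empty word 1 and for j = l the word z_{k_{j+1}}⋯z_{k_l} is the empty word 1. -/

import Mathlib

open scoped BigOperators

/-- The product of `ℤ/pℤ` over all primes `p`. -/
abbrev PreA : Type := ∀ p : Nat.Primes, ZMod p

/-- The ideal of families that vanish for all but finitely many primes. -/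
def nullIdeal : Ideal PreA where
  carrier := {f | {p | f p ≠ 0}.Finite}
  zero_mem' := by simp
  add_mem' := by
    intro f g hf hg
    refine (hf.union hg).subset fun p hp => ?_
    by_contra hc
    simp only [Set.mem_union, Set.mem_setOf_eq, not_or, not_not] at hc
    exact hp (by simp [Set.mem_setOf_eq, hc.1, hc.2])
  smul_mem' := by
    intro c f hf
    refine hf.subset fun p hp => ?_
    simp only [Set.mem_setOf_eq] at hp ⊢
    intro h0
    exact hp (by simp [h0])

/-- The ring `𝒜 = (∏_p ℤ/pℤ)/(⊕_p ℤ/pℤ)`. -/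
abbrev A : Type := PreA ⧸ nullIdeal

/-- `zetaSum p ks b` is `∑_{b > m₁ > ⋯ > m_n ≥ 1} ∏ mᵢ^{-kᵢ}` in `ℤ/pℤ`. -/
def zetaSum (p : ℕ) : List ℕ → ℕ → ZMod p
  | [], _ => 1
  | k :: ks, b => ∑ m ∈ Finset.Ico 1 b, ((m : ZMod p)⁻¹) ^ k * zetaSum p ks m

/-- `zetaStarSum p ks b` is `∑_{b > m₁ ≥ ⋯ ≥ m_n ≥ 1} ∏ mᵢ^{-kᵢ}` in `ℤ/pℤ`. -/
def zetaStarSum (p : ℕ) : List ℕ → ℕ → ZMod p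
  | [], _ => 1
  | k :: ks, b => ∑ m ∈ Finset.Ico 1 b, ((m : ZMod p)⁻¹) ^ k * zetaStarSum p ks (m + 1)

/-- The finite multiple zeta value `ζ_𝒜(k₁,…,k_n)`. -/
def zetaA (ks : List ℕ) : A :=
  Ideal.Quotient.mk nullIdeal (fun p => zetaSum p ks p)

/-- The finite multiple zeta-star value `ζ⋆_𝒜(k₁,…,k_n)`. -/
def zetaStarA (ks : List ℕ) : A :=
  Ideal.Quotient.mk nullIdeal (fun p => zetaStarSum p ks p)

/-- `ℋ¹ = ℚ⟨z₁,z₂,…⟩`, the noncommutative polynomial algebra on variables `z_k`, `k ≥ 1`. -/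
abbrev H1 : Type := MonoidAlgebra ℚ (FreeMonoid ℕ+)

/-- The monomial (word) `z_{k₁} ⋯ z_{k_n}` in `ℋ¹`. -/
noncomputable def word (w : List ℕ+) : H1 :=
  MonoidAlgebra.of ℚ (FreeMonoid ℕ+) (FreeMonoid.ofList w)

/-- Shuffle product on words (with values in `ℋ¹`). -/
noncomputable def shuffleW : List ℕ+ → List ℕ+ → H1
  | [], w => word w
  | v, [] => word v
  | k :: v, l :: w => word [k] * shuffleW v (l :: w) + word [l] * shuffleW (k :: v) w
  termination_by v w => v.length + w.length
  decreasing_by all_goals first | (simp; omega) | simp | omega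

/-- The shuffle product `ш` on `ℋ¹`, as the bilinear extension of `shuffleW`. -/
noncomputable def shuffle (x y : H1) : H1 :=
  Finsupp.sum x.coeff fun v c => Finsupp.sum y.coeff fun w c' =>
    (c * c') • shuffleW (FreeMonoid.toList v) (FreeMonoid.toList w)

/-- Harmonic product on words (with values in `ℋ¹`). -/
noncomputable def harmW : List ℕ+ → List ℕ+ → H1
  | [], w => word w
  | v, [] => word v
  | k :: v, l :: w =>
      word [k] * harmW v (l :: w) + word [l] * harmW (k :: v) w
        + word [k + l] * harmW v w
  termination_by v w => v.length + w.length
  decreasing_by all_goals first | (simp; omega) | simp | omega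

/-- The harmonic product `*` on `ℋ¹`, as the bilinear extension of `harmW`. -/
noncomputable def harm (x y : H1) : H1 :=
  Finsupp.sum x.coeff fun v c => Finsupp.sum y.coeff fun w c' =>
    (c * c') • harmW (FreeMonoid.toList v) (FreeMonoid.toList w)

/-- Star-harmonic product on words (with values in `ℋ¹`). -/
noncomputable def harmStarW : List ℕ+ → List ℕ+ → H1
  | [], w => word w
  | v, [] => word v
  | k :: v, l :: w =>
      word [k] * harmStarW v (l :: w) + word [l] * harmStarW (k :: v) w
        - word [k + l] * harmStarW v w
  termination_by v w => v.length + w.length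
  decreasing_by all_goals first | (simp; omega) | simp | omega

/-- The product `∗̄` on `ℋ¹`, as the bilinear extension of `harmStarW`. -/
noncomputable def harmStar (x y : H1) : H1 :=
  Finsupp.sum x.coeff fun v c => Finsupp.sum y.coeff fun w c' =>
    (c * c') • harmStarW (FreeMonoid.toList v) (FreeMonoid.toList w)

/-- The image of a rational number in `𝒜`. -/
def ratA (q : ℚ) : A :=
  Ideal.Quotient.mk nullIdeal (fun p => (q.num : ZMod p) * ((q.den : ZMod p))⁻¹)

/-- The `ℚ`-linear map `Z_𝒜 : ℋ¹ → 𝒜` sending `z_{k₁} ⋯ z_{k_n}` to `ζ_𝒜(k₁,…,k_n)`. -/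
noncomputable def ZA (x : H1) : A :=
  Finsupp.sum x.coeff fun w c => ratA c * zetaA ((FreeMonoid.toList w).map (fun k => (k : ℕ)))

/-- The `ℚ`-linear map `Z̄_𝒜 : ℋ¹ → 𝒜` sending `z_{k₁} ⋯ z_{k_n}` to `ζ⋆_𝒜(k₁,…,k_n)`. -/
noncomputable def ZSA (x : H1) : A :=
  Finsupp.sum x.coeff fun w c => ratA c * zetaStarA ((FreeMonoid.toList w).map (fun k => (k : ℕ)))

/-- Sum of a list of positive integers (equal to the actual sum for nonempty lists). -/
def psum : List ℕ+ → ℕ+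
  | [] => 1
  | k :: t => t.foldl (· + ·) k

/-- The map `d` on words: `d(z_{k₁}⋯z_{k_n}) = ∑_{m} ∑_{0=i₀<⋯<i_m=n}
`z_{k_{i₀+1}+⋯+k_{i₁}} ⋯ z_{k_{i_{m-1}+1}+⋯+k_{i_m}}`. -/
noncomputable def dW (w : List ℕ+) : H1 :=
  ∑ c : Composition w.length, word ((w.splitWrtComposition c).map psum)

/-- `z_a` for a tuple `a = (a₁,…,a_m; b₁,…,b_m; c₁,…,c_n) ∈ I_{m,n}`:
`∑_{σ,τ ∈ S_m} z_{a_{σ(1)}} z_{b_{τ(1)}} ⋯ z_{a_{σ(m)}} z_{b_{τ(m)}} ш z_{c₁} ш ⋯ ш z_{c_n}`. -/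
noncomputable def zTuple {m n : ℕ} (a b : Fin m → ℕ+) (c : Fin n → ℕ+) : H1 :=
  ∑ σ : Equiv.Perm (Fin m), ∑ τ : Equiv.Perm (Fin m),
    (List.ofFn c).foldl (fun w k => shuffle w (word [k]))
      (word ((List.ofFn (fun i => [a (σ i), b (τ i)])).flatten))

/-- The statement `P_{m,n}`: `Z_𝒜(z_a) = Z̄_𝒜(z_a) = 0` for all `a ∈ I_{m,n}`. -/
def Pmn (m n : ℕ) : Prop :=
  ∀ (a b : Fin m → ℕ+) (c : Fin n → ℕ+),
    (∀ i, Odd (a i : ℕ)) → (∀ i, Odd (b i : ℕ)) → (∀ j, Even (c j : ℕ)) →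
    ZA (zTuple a b c) = 0 ∧ ZSA (zTuple a b c) = 0

/-- The list `{c}^{n₀}, a, {c}^{n₁}, b, {c}^{n₂}, …, a, {c}^{n_{2m-1}}, b, {c}^{n_{2m}}`. -/
def bbList (a b c : ℕ) (m : ℕ) (f : Fin (2 * m + 1) → ℕ) : List ℕ :=
  (List.ofFn (fun j : Fin m =>
      List.replicate (f ⟨2 * j.val, by have := j.isLt; omega⟩) c ++ [a]
        ++ List.replicate (f ⟨2 * j.val + 1, by have := j.isLt; omega⟩) c ++ [b])).flatten
    ++ List.replicate (f ⟨2 * m, by omega⟩) c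

/-- `∑_{j=0}^{l} (−1)^j d(z_{k_j} ⋯ z_{k₁}) * (z_{k_{j+1}} ⋯ z_{k_l}) = 0`. -/
lemma word_cons (a : ℕ+) (v : List ℕ+) : word (a :: v) = word [a] * word v := by
  unfold word; rw [← map_mul]; rfl

lemma harmW_nil_left (w : List ℕ+) : harmW [] w = word w := by rw [harmW]

lemma harmW_nil_right (v : List ℕ+) : harmW v [] = word v := by
  cases v
  · rw [harmW]
  · rw [harmW.eq_def]

lemma harmW_cons_cons (a b : ℕ+) (v w : List ℕ+) :
    harmW (a :: v) (b :: w) =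
      word [a] * harmW v (b :: w) + word [b] * harmW (a :: v) w
        + word [a + b] * harmW v w := by
  rw [harmW]

lemma word_def (v : List ℕ+) :
    word v = MonoidAlgebra.single (FreeMonoid.ofList v) (1 : ℚ) := rfl

lemma harm_word_word (v w : List ℕ+) : harm (word v) (word w) = harmW v w := by
  rw [harm, word_def v, word_def w, MonoidAlgebra.coeff_single, MonoidAlgebra.coeff_single]
  rw [Finsupp.sum_single_index, Finsupp.sum_single_index]
  · simp
  · simp
  · rw [Finsupp.sum_single_index] <;> simp

lemma harm_zero_left (y : H1) : harm 0 y = 0 := by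
  rw [harm, MonoidAlgebra.coeff_zero, Finsupp.sum_zero_index]

lemma harm_add_left (x x' y : H1) : harm (x + x') y = harm x y + harm x' y := by
  classical
  rw [harm, harm, harm, MonoidAlgebra.coeff_add, Finsupp.sum_add_index]
  · intro v _; simp
  · intro v _ c c'; simp [add_mul, add_smul, Finsupp.sum_add]

lemma harm_smul_left (c : ℚ) (x y : H1) : harm (c • x) y = c • harm x y := by
  rw [harm, harm, MonoidAlgebra.coeff_smul, Finsupp.sum_smul_index', Finsupp.smul_sum]
  · apply Finsupp.sum_congr
    intro v _
    rw [Finsupp.smul_sum]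
    apply Finsupp.sum_congr
    intro w _
    rw [smul_eq_mul, smul_smul, mul_assoc]
  · intro v; simp

lemma harm_sum_left {α : Type*} (s : Finset α) (f : α → H1) (y : H1) :
    harm (∑ i ∈ s, f i) y = ∑ i ∈ s, harm (f i) y := by
  classical
  induction s using Finset.induction with
  | empty => simp [harm_zero_left]
  | insert _ _ h ih => rw [Finset.sum_insert h, harm_add_left, ih, Finset.sum_insert h]
lemma single_eq_smul_word (u : FreeMonoid ℕ+) (c : ℚ) :
    MonoidAlgebra.single u c = c • word (FreeMonoid.toList u) := by
  rw [word_def, FreeMonoid.ofList_toList, MonoidAlgebra.smul_single, smul_eq_mul, mul_one]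

lemma harm_one_right (x : H1) : harm x (word []) = x := by
  rw [harm, word_def, MonoidAlgebra.coeff_single]
  have : (Finsupp.sum x.coeff fun v c =>
      Finsupp.sum (Finsupp.single (FreeMonoid.ofList []) (1:ℚ)) fun w c' =>
        (c * c') • harmW (FreeMonoid.toList v) (FreeMonoid.toList w)) =
      Finsupp.sum x.coeff fun v c => MonoidAlgebra.single v c := by
    apply Finsupp.sum_congr
    intro v _
    rw [Finsupp.sum_single_index (by simp), mul_one,
      show FreeMonoid.toList (FreeMonoid.ofList ([] : List ℕ+)) = [] from rfl,
      harmW_nil_right, single_eq_smul_word]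
  rw [this, MonoidAlgebra.sum_coeff_single]

lemma harm_one_left (y : List ℕ+) : harm (word []) (word y) = word y := by
  rw [harm_word_word, harmW_nil_left]

lemma harm_lmul_word (a b : ℕ+) (x : H1) (v : List ℕ+) :
    harm (word [a] * x) (word (b :: v)) =
      word [a] * harm x (word (b :: v)) + word [b] * harm (word [a] * x) (word v)
        + word [a + b] * harm x (word v) := by
  induction x using MonoidAlgebra.induction_linear with
  | zero => simp [harm_zero_left]
  | add f g hf hg =>
      have h1 := harm_add_left f g (word v)
      have h2 := harm_add_left f g (word (b :: v))
      simp only [mul_add, harm_add_left, hf, hg, h1, h2]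
      abel
  | single u c =>
      rw [single_eq_smul_word, mul_smul_comm, harm_smul_left, harm_smul_left, harm_smul_left,
        harm_smul_left]
      simp only [← word_cons, harm_word_word, harmW_cons_cons, smul_add, mul_smul_comm]
lemma psum_cons_cons (a b : ℕ+) (t : List ℕ+) : psum (a :: b :: t) = psum ((a + b) :: t) := rfl

lemma psum_cons (a : ℕ+) {t : List ℕ+} (h : t ≠ []) : psum (a :: t) = a + psum t := by
  induction t generalizing a with
  | nil => exact absurd rfl h
  | cons b t' ih =>
      cases t' with
      | nil => rfl
      | cons c t'' =>
          rw [psum_cons_cons, ih (a + b) (by simp), ih b (by simp), add_assoc]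

lemma psum_append_singleton (x : ℕ+) {s : List ℕ+} (h : s ≠ []) :
    psum (s ++ [x]) = psum s + x := by
  induction s with
  | nil => exact absurd rfl h
  | cons a s' ih =>
      cases s' with
      | nil => rfl
      | cons b s'' =>
          rw [List.cons_append, psum_cons a (by simp), ih (by simp),
            psum_cons a (by simp), add_assoc]

lemma psum_reverse (t : List ℕ+) : psum t.reverse = psum t := by
  induction t with
  | nil => rfl
  | cons a t' ih =>
      cases h : t' with
      | nil => rfl
      | cons b t'' =>
          rw [List.reverse_cons, psum_append_singleton a (by simp [h]), ← h, ih,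
            psum_cons a (by simp [h]), add_comm]

lemma comp_blocks_ne_nil {n : ℕ} (h : 0 < n) (c : Composition n) : c.blocks ≠ [] := by
  intro h0
  have := c.blocks_sum
  rw [h0] at this
  simp at this
  omega

lemma dW_nil : dW [] = word [] := by
  rw [dW]
  have h1 : ∀ c : Composition ([] : List ℕ+).length,
      word ((([] : List ℕ+).splitWrtComposition c).map psum) = word [] := by
    intro c
    have : c.blocks = [] := by
      by_contra hne
      obtain ⟨x, t, hxt⟩ := List.exists_cons_of_ne_nil hne
      have hs := c.blocks_sum
      have hp := c.blocks_pos (by rw [hxt]; exact List.mem_cons_self)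
      rw [hxt] at hs
      simp [List.sum_cons] at hs
      omega
    rw [List.splitWrtComposition, this]
    rfl
  rw [Finset.sum_congr rfl (fun c _ => h1 c), Finset.sum_const]
  have : Fintype.card (Composition ([] : List ℕ+).length) = 1 := by
    rw [show ([] : List ℕ+).length = 0 from rfl, composition_card]; norm_num
  rw [Finset.card_univ, this, one_smul]

lemma dW_single (a : ℕ+) : dW [a] = word [a] := by
  rw [dW]
  have h1 : ∀ c : Composition ([a] : List ℕ+).length,
      word ((([a] : List ℕ+).splitWrtComposition c).map psum) = word [a] := by
    intro c
    have hb : c.blocks = [1] := by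
      have hs := c.blocks_sum
      rcases hbl : c.blocks with _ | ⟨x, _ | ⟨y, t⟩⟩
      · rw [hbl] at hs; simp at hs
      · rw [hbl] at hs; simp at hs; rw [hs]
      · exfalso
        have hx := c.blocks_pos (by rw [hbl]; exact List.mem_cons_self)
        have hy : 0 < y := c.blocks_pos (by rw [hbl]; exact List.mem_cons_of_mem _ (List.mem_cons_self))
        rw [hbl] at hs
        have : x + (y + t.sum) = 1 := by simpa using hs
        omega
    rw [List.splitWrtComposition, hb]
    rfl
  rw [Finset.sum_congr rfl (fun c _ => h1 c), Finset.sum_const]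
  have : Fintype.card (Composition ([a] : List ℕ+).length) = 1 := by
    rw [show ([a] : List ℕ+).length = 1 from rfl, composition_card]; norm_num
  rw [Finset.card_univ, this, one_smul]
lemma headI_cons_tail {α : Type*} [Inhabited α] : ∀ (l : List α), l ≠ [] → l.headI :: l.tail = l
  | [], h => absurd rfl h
  | _ :: _, _ => rfl

/-- Prepend a block of size 1. -/
def compI1 {n : ℕ} (c : Composition n) : Composition (n + 1) where
  blocks := 1 :: c.blocks
  blocks_pos := by
    intro i hi
    rcases List.mem_cons.mp hi with h | h
    · omega
    · exact c.blocks_pos h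
  blocks_sum := by simp [c.blocks_sum, Nat.add_comm]

/-- Increment the first block. -/
def compI2 {n : ℕ} (c : Composition (n + 1)) : Composition (n + 2) where
  blocks := (c.blocks.headI + 1) :: c.blocks.tail
  blocks_pos := by
    intro i hi
    rcases List.mem_cons.mp hi with h | h
    · omega
    · exact c.blocks_pos (List.mem_of_mem_tail h)
  blocks_sum := by
    have hne := comp_blocks_ne_nil (Nat.succ_pos n) c
    have hs := c.blocks_sum
    rw [show c.blocks = c.blocks.headI :: c.blocks.tail from (headI_cons_tail _ hne).symm,
      List.sum_cons] at hs
    rw [List.sum_cons]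
    omega

lemma compI2_blocks {n : ℕ} (c : Composition (n + 1)) :
    ∃ h t, c.blocks = h :: t ∧ (compI2 c).blocks = (h + 1) :: t := by
  have hne := comp_blocks_ne_nil (Nat.succ_pos n) c
  rcases hb : c.blocks with _ | ⟨x, t⟩
  · exact absurd hb hne
  · exact ⟨x, t, rfl, by simp [compI2, hb]⟩

lemma dW_cons_cons (a b : ℕ+) (t : List ℕ+) :
    dW (a :: b :: t) = word [a] * dW (b :: t) + dW ((a + b) :: t) := by
  classical
  have hinj : Function.Injective
      (Sum.elim compI1 compI2 :
        Composition (t.length + 1) ⊕ Composition (t.length + 1) → Composition (t.length + 2)) := by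
    rintro (c | c) (c' | c') h <;> simp only [Sum.elim_inl, Sum.elim_inr] at h
    · congr 1
      ext1
      have : (compI1 c).blocks = (compI1 c').blocks := by rw [h]
      simpa [compI1] using this
    · exfalso
      obtain ⟨h', t', hb, hb2⟩ := compI2_blocks c'
      have hpos : 0 < h' := c'.blocks_pos (by rw [hb]; exact List.mem_cons_self)
      have hh : (compI1 c).blocks = (compI2 c').blocks := by rw [h]
      rw [hb2] at hh
      simp [compI1] at hh
      omega
    · exfalso
      obtain ⟨h', t', hb, hb2⟩ := compI2_blocks c
      have hpos : 0 < h' := c.blocks_pos (by rw [hb]; exact List.mem_cons_self)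
      have hh : (compI2 c).blocks = (compI1 c').blocks := by rw [h]
      rw [hb2] at hh
      simp [compI1] at hh
      omega
    · obtain ⟨h1, t1, hb1, hb1'⟩ := compI2_blocks c
      obtain ⟨h2, t2, hb2, hb2'⟩ := compI2_blocks c'
      have hh : (compI2 c).blocks = (compI2 c').blocks := by rw [h]
      rw [hb1', hb2'] at hh
      simp at hh
      congr 1
      ext1
      rw [hb1, hb2, hh.1, hh.2]
  have hbij : Function.Bijective
      (Sum.elim compI1 compI2 :
        Composition (t.length + 1) ⊕ Composition (t.length + 1) → Composition (t.length + 2)) := by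
    rw [Fintype.bijective_iff_injective_and_card]
    refine ⟨hinj, ?_⟩
    simp [composition_card]
    ring
  rw [show dW (a :: b :: t) = ∑ c : Composition (t.length + 2),
        word (((a :: b :: t).splitWrtComposition c).map psum) from rfl,
      show dW (b :: t) = ∑ c : Composition (t.length + 1),
        word (((b :: t).splitWrtComposition c).map psum) from rfl,
      show dW ((a + b) :: t) = ∑ c : Composition (t.length + 1),
        word ((((a + b) :: t).splitWrtComposition c).map psum) from rfl]
  rw [← Fintype.sum_bijective _ hbij _
    (fun c => word (((a :: b :: t).splitWrtComposition c).map psum)) (fun x => rfl)]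
  rw [Fintype.sum_sum_type]
  simp only [Sum.elim_inl, Sum.elim_inr]
  congr 1
  · rw [Finset.mul_sum]
    apply Finset.sum_congr rfl
    intro c _
    have hsplit : (a :: b :: t).splitWrtComposition (compI1 c) =
        [a] :: (b :: t).splitWrtComposition c := by
      show (a :: b :: t).splitWrtCompositionAux (1 :: c.blocks) = _
      rw [List.splitWrtCompositionAux_cons]
      rfl
    rw [hsplit, List.map_cons, word_cons]
    rfl
  · apply Finset.sum_congr rfl
    intro c _
    obtain ⟨h, tl, hb, hb'⟩ := compI2_blocks c
    have hpos : 0 < h := c.blocks_pos (by rw [hb]; exact List.mem_cons_self)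
    obtain ⟨h', rfl⟩ : ∃ h', h = h' + 1 := ⟨h - 1, by omega⟩
    have hsplit1 : (a :: b :: t).splitWrtComposition (compI2 c) =
        (a :: b :: t.take h') :: (t.drop h').splitWrtCompositionAux tl := by
      show (a :: b :: t).splitWrtCompositionAux (compI2 c).blocks = _
      rw [hb', List.splitWrtCompositionAux_cons]
      simp
    have hsplit2 : ((a + b) :: t).splitWrtComposition c =
        ((a + b) :: t.take h') :: (t.drop h').splitWrtCompositionAux tl := by
      show ((a + b) :: t).splitWrtCompositionAux c.blocks = _
      rw [hb, List.splitWrtCompositionAux_cons]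
      simp
    rw [hsplit1, hsplit2, List.map_cons, List.map_cons, psum_cons_cons]
lemma word_nil : word [] = 1 := rfl

lemma dW_full_aux : ∀ (n : ℕ) (w : List ℕ+), w.length = n → w ≠ [] →
    dW w = ∑ r ∈ Finset.range w.length,
      word [psum (w.take (r + 1))] * dW (w.drop (r + 1)) := by
  intro n
  induction n using Nat.strong_induction_on with
  | _ n ih =>
  intro w hn hw
  rcases w with _ | ⟨a, t⟩
  · exact absurd rfl hw
  rcases t with _ | ⟨b, t'⟩
  · rw [dW_single, show (([a] : List ℕ+)).length = 1 from rfl, Finset.sum_range_one]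
    simp [dW_nil, word_nil]
    rfl
  · rw [dW_cons_cons]
    have hlt : t'.length + 1 < n := by
      rw [← hn]; simp
    have hrec := ih (t'.length + 1) hlt ((a + b) :: t') (by simp) (by simp)
    rw [hrec]
    rw [show ((a :: b :: t').length) = (t'.length + 1) + 1 from by simp,
      Finset.sum_range_succ']
    rw [show (((a + b) :: t') : List ℕ+).length = t'.length + 1 from by simp,
      add_comm (word [a] * dW (b :: t'))]
    congr 1

lemma dW_full (w : List ℕ+) (hw : w ≠ []) :
    dW w = ∑ r ∈ Finset.range w.length,
      word [psum (w.take (r + 1))] * dW (w.drop (r + 1)) :=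
  dW_full_aux w.length w rfl hw

lemma D_expand (w : List ℕ+) (j : ℕ) (hj1 : 1 ≤ j) (hj2 : j ≤ w.length) :
    dW ((w.take j).reverse) = ∑ i ∈ Finset.range j,
      word [psum ((w.drop i).take (j - i))] * dW ((w.take i).reverse) := by
  have h2 : (w.take j).length = j := by simp [hj2]
  have hlen : ((w.take j).reverse).length = j := by simp [h2]
  have hne : (w.take j).reverse ≠ [] := by
    intro h
    rw [h] at hlen
    simp at hlen
    omega
  rw [dW_full _ hne, hlen, ← Finset.sum_range_reflect]
  apply Finset.sum_congr rfl
  intro i hi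
  have hij : i < j := Finset.mem_range.mp hi
  rw [show j - 1 - i + 1 = j - i from by omega]
  rw [List.take_reverse, List.drop_reverse, h2,
    show j - (j - i) = i from by omega,
    List.drop_take, List.take_take, show min i j = i from by omega,
    psum_reverse]
lemma word_append (u v : List ℕ+) : word (u ++ v) = word u * word v := by
  unfold word; rw [← map_mul]; rfl

lemma eq_single_psum (s : List ℕ+) (h : s.length = 1) : s = [psum s] := by
  rcases s with _ | ⟨a, _ | ⟨b, t⟩⟩
  · simp at h
  · rfl
  · simp at h

lemma key_lemma (w : List ℕ+) (l : ℕ) (hlw : w.length = l) (hl : 1 ≤ l)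
    (j : ℕ) (hj : j ≤ l) :
    harm (dW ((w.take j).reverse)) (word (w.drop j))
      = (∑ i ∈ Finset.range j, word [psum ((w.drop i).take (j - i))] *
          harm (dW ((w.take i).reverse)) (word (w.drop j)))
        + (if j = l then 0 else ∑ i ∈ Finset.range (j + 1),
            word [psum ((w.drop i).take (j + 1 - i))] *
              harm (dW ((w.take i).reverse)) (word (w.drop (j + 1)))) := by
  rcases Nat.eq_zero_or_pos j with rfl | hj1
  · rw [if_neg (by omega)]
    simp only [Finset.range_zero, Finset.sum_empty, zero_add, Finset.sum_range_one,
      List.take_zero, List.reverse_nil, dW_nil, List.drop_zero, Nat.sub_zero]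
    rw [harm_one_left, harm_one_left]
    have h1 : (w.take 1).length = 1 := by
      simp only [List.length_take]
      omega
    conv_lhs => rw [← List.take_append_drop 1 w]
    rw [word_append]
    congr 1
    exact congrArg word (eq_single_psum _ h1)
  · have hexp := D_expand w j hj1 (by omega)
    rw [hexp, harm_sum_left]
    by_cases hjl : j = l
    · rw [if_pos hjl, add_zero]
      have hdl : w.drop j = [] := by
        rw [hjl, ← hlw, List.drop_length]
      rw [hdl]
      apply Finset.sum_congr rfl
      intro i _
      rw [harm_one_right, harm_one_right]
    · rw [if_neg hjl]
      have hjlen : j < w.length := by omega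
      have hdropj : w.drop j = w[j]'hjlen :: w.drop (j + 1) := List.drop_eq_getElem_cons hjlen
      have hstep : ∀ i ∈ Finset.range j,
          harm (word [psum ((w.drop i).take (j - i))] * dW ((w.take i).reverse))
              (word (w.drop j))
            = word [psum ((w.drop i).take (j - i))] *
                harm (dW ((w.take i).reverse)) (word (w.drop j))
              + word [w[j]'hjlen] *
                harm (word [psum ((w.drop i).take (j - i))] * dW ((w.take i).reverse))
                  (word (w.drop (j + 1)))
              + word [psum ((w.drop i).take (j - i)) + w[j]'hjlen] *
                harm (dW ((w.take i).reverse)) (word (w.drop (j + 1))) := by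
        intro i _
        conv_lhs => rw [hdropj]
        rw [harm_lmul_word, ← hdropj]
      rw [Finset.sum_congr rfl hstep, Finset.sum_add_distrib, Finset.sum_add_distrib]
      have e2 : ∑ i ∈ Finset.range j, word [w[j]'hjlen] *
            harm (word [psum ((w.drop i).take (j - i))] * dW ((w.take i).reverse))
              (word (w.drop (j + 1)))
          = word [w[j]'hjlen] * harm (dW ((w.take j).reverse)) (word (w.drop (j + 1))) := by
        rw [← Finset.mul_sum, ← harm_sum_left, ← hexp]
      have e3 : ∀ i ∈ Finset.range j,
          word [psum ((w.drop i).take (j - i)) + w[j]'hjlen] *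
              harm (dW ((w.take i).reverse)) (word (w.drop (j + 1)))
            = word [psum ((w.drop i).take (j + 1 - i))] *
              harm (dW ((w.take i).reverse)) (word (w.drop (j + 1))) := by
        intro i hi
        have hij : i < j := Finset.mem_range.mp hi
        have htake : (w.drop i).take (j + 1 - i) = (w.drop i).take (j - i) ++ [w[j]'hjlen] := by
          rw [show j + 1 - i = (j - i) + 1 from by omega, List.take_succ]
          congr 1
          rw [List.getElem?_drop, show i + (j - i) = j from by omega,
            List.getElem?_eq_getElem hjlen]
          rfl
        have hne : (w.drop i).take (j - i) ≠ [] := by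
          have hlen2 : ((w.drop i).take (j - i)).length = j - i := by
            have hc : (w.drop i).length = w.length - i := List.length_drop
            rw [List.length_take, hc]
            omega
          intro hcon
          rw [hcon] at hlen2
          simp at hlen2
          omega
        rw [htake, psum_append_singleton _ hne]
      rw [Finset.sum_congr rfl e3, e2, Finset.sum_range_succ]
      have e4 : psum ((w.drop j).take (j + 1 - j)) = w[j]'hjlen := by
        rw [show j + 1 - j = 1 from by omega, hdropj]
        rfl
      rw [e4]
      abel
theorem semi_reversal (l : ℕ) (hl : 1 ≤ l) (k : Fin l → ℕ+) :
    ∑ j ∈ Finset.range (l + 1),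
      ((-1 : ℚ) ^ j) •
        harm (dW (((List.ofFn k).take j).reverse)) (word ((List.ofFn k).drop j)) = 0 := by
  suffices h : ∀ w : List ℕ+, w.length = l →
      ∑ j ∈ Finset.range (l + 1),
        ((-1 : ℚ) ^ j) • harm (dW ((w.take j).reverse)) (word (w.drop j)) = 0 by
    exact h _ (List.length_ofFn (f := k))
  intro w hlw
  set A : ℕ → H1 := fun j => ∑ i ∈ Finset.range j, word [psum ((w.drop i).take (j - i))] *
    harm (dW ((w.take i).reverse)) (word (w.drop j)) with hA
  have hkey : ∀ j, j ≤ l → harm (dW ((w.take j).reverse)) (word (w.drop j))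
      = A j + (if j = l then 0 else A (j + 1)) := by
    intro j hj
    have hk := key_lemma w l hlw hl j hj
    rw [hA]
    exact hk
  have step1 : ∑ j ∈ Finset.range (l + 1),
      ((-1 : ℚ) ^ j) • harm (dW ((w.take j).reverse)) (word (w.drop j))
      = ∑ j ∈ Finset.range (l + 1),
        ((-1 : ℚ) ^ j) • (A j + (if j = l then 0 else A (j + 1))) := by
    apply Finset.sum_congr rfl
    intro j hj
    rw [hkey j (by have := Finset.mem_range.mp hj; omega)]
  rw [step1]
  have step2 : ∑ j ∈ Finset.range (l + 1),
      ((-1 : ℚ) ^ j) • (A j + (if j = l then 0 else A (j + 1)))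
      = (∑ j ∈ Finset.range (l + 1), ((-1 : ℚ) ^ j) • A j)
        + ∑ j ∈ Finset.range (l + 1), ((-1 : ℚ) ^ j) • (if j = l then 0 else A (j + 1)) := by
    simp only [smul_add]
    rw [Finset.sum_add_distrib]
  rw [step2]
  have h1 : ∑ j ∈ Finset.range (l + 1), ((-1 : ℚ) ^ j) • A j
      = (∑ j ∈ Finset.range l, ((-1 : ℚ) ^ (j + 1)) • A (j + 1)) + ((-1 : ℚ) ^ 0) • A 0 :=
    Finset.sum_range_succ' _ l
  have hA0 : A 0 = 0 := by rw [hA]; simp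
  have h2 : ∑ j ∈ Finset.range (l + 1), ((-1 : ℚ) ^ j) • (if j = l then 0 else A (j + 1))
      = ∑ j ∈ Finset.range l, ((-1 : ℚ) ^ j) • A (j + 1) := by
    rw [Finset.sum_range_succ, if_pos rfl, smul_zero, add_zero]
    apply Finset.sum_congr rfl
    intro j hj
    rw [if_neg (by have := Finset.mem_range.mp hj; omega)]
  rw [h1, h2, hA0, smul_zero, add_zero, ← Finset.sum_add_distrib]
  apply Finset.sum_eq_zero
  intro j _
  rw [← add_smul]
  have hz : (-1 : ℚ) ^ (j + 1) + (-1 : ℚ) ^ j = 0 := by ring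
  rw [hz, zero_smul]
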